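/- Candidate-probability bound: let v_1,…,v_n be valuation functions and s a signal profile with bidders renamed so that v_1(s) ≥ ⋯ ≥ v_n(s) > 0; let k := max{ i : v_i(s) > v_1(s)/2 } and low_j^i := inf_{o_i ∈ S_i} v_j(o_i, s_{-i}), assumed positive for all i, j. Then for every bidder i, E_{r,π}[c_i] ≤ 1/(i(i+1)) + log₂†( 2 v_i(s)/low_1^i ) / (k+1) + ∑_{j ∈ [k], j ≠ i} log₂†( v_i(s)/low_j^i ) / (j(j+1)). -/

import Mathlib

open MeasureTheory Finset
open scoped ENNReal

/-- Lower estimate of valuation `v` with respect to bidder `i` at profile `s`: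
`low_i(v,s) = inf_{o_i ∈ S_i} v(o_i, s_{-i})`. -/
noncomputable def lowEst {n : ℕ} {S : Fin n → Type*} [∀ i, Nonempty (S i)]
    (v : ((i : Fin n) → S i) → ℝ) (s : (i : Fin n) → S i) (i : Fin n) : ℝ :=
  sInf (Set.range fun o : S i => v (Function.update s i o))

/-- Truncated base-2 logarithm: `log₂†(a) = max(0, min(1, log₂ a))`. -/
noncomputable def logdag (a : ℝ) : ℝ := max 0 (min 1 (Real.logb 2 a))

/-- Random rounding-down function: `f_r(w) = 2^(r+k)` for the unique `k ∈ ℤ` with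
`2^(r+k) ≤ w < 2^(r+k+1)`. -/
noncomputable def fr (r w : ℝ) : ℝ := (2 : ℝ) ^ (r + (⌊Real.logb 2 w - r⌋ : ℝ))

/-- Lexicographic tie-breaking: `a >_π b`, where `a` is associated with bidder `i`
and `b` with bidder `j`, holds if `a > b`, or `a = b` and `π(i) > π(j)`. -/
def lexGt {n : ℕ} (π : Equiv.Perm (Fin n)) (i j : Fin n) (a b : ℝ) : Prop :=
  b < a ∨ (a = b ∧ π j < π i)

noncomputable instance {n : ℕ} (π : Equiv.Perm (Fin n)) (i j : Fin n) (a b : ℝ) :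
    Decidable (lexGt π i j a b) := by unfold lexGt; infer_instance

/-- Bidder `i` is a candidate (for random seed `r` and tie-breaking permutation `π`)
if `f_r(v_i(s)) >_π f_r(low_j^i)` for every bidder `j ≠ i`. -/
def IsCandidate {n : ℕ} {S : Fin n → Type*} [∀ i, Nonempty (S i)]
    (v : Fin n → ((i : Fin n) → S i) → ℝ) (s : (i : Fin n) → S i)
    (r : ℝ) (π : Equiv.Perm (Fin n)) (i : Fin n) : Prop :=
  ∀ j, j ≠ i → lexGt π i j (fr r (v i s)) (fr r (lowEst (v j) s i))

/-- `E_{r,π}[c_i]`: the probability that bidder `i` is a candidate, with `r`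
uniform on `[0,1)` and `π` uniform over all `n!` permutations. -/
noncomputable def Ecand {n : ℕ} {S : Fin n → Type*} [∀ i, Nonempty (S i)]
    (v : Fin n → ((i : Fin n) → S i) → ℝ) (s : (i : Fin n) → S i) (i : Fin n) : ℝ :=
  (n.factorial : ℝ)⁻¹ * ∑ π : Equiv.Perm (Fin n),
    (volume {r ∈ Set.Ico (0:ℝ) 1 | IsCandidate v s r π i}).toReal

/-! ### Auxiliary lemmas -/

section Aux

lemma logdag_nonneg (a : ℝ) : 0 ≤ logdag a := le_max_left _ _

lemma fr_lt_iff (r u w : ℝ) : fr r u < fr r w ↔ (⌊Real.logb 2 u - r⌋ : ℤ) < ⌊Real.logb 2 w - r⌋ := by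
  rw [fr, fr, Real.rpow_lt_rpow_left_iff one_lt_two, add_lt_add_iff_left, Int.cast_lt]

lemma fr_le_iff (r u w : ℝ) : fr r u ≤ fr r w ↔ (⌊Real.logb 2 u - r⌋ : ℤ) ≤ ⌊Real.logb 2 w - r⌋ := by
  rw [fr, fr, Real.rpow_le_rpow_left_iff one_lt_two, add_le_add_iff_left, Int.cast_le]

lemma fr_eq_iff (r u w : ℝ) : fr r u = fr r w ↔ (⌊Real.logb 2 u - r⌋ : ℤ) = ⌊Real.logb 2 w - r⌋ := by
  constructor
  · intro h
    have h1 := (fr_le_iff r u w).1 h.le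
    have h2 := (fr_le_iff r w u).1 h.ge
    omega
  · intro h; rw [fr, fr, h]

lemma fr_pos (r w : ℝ) : 0 < fr r w := Real.rpow_pos_of_pos two_pos _

lemma fr_mono (r : ℝ) {u w : ℝ} (hu : 0 < u) (h : u ≤ w) : fr r u ≤ fr r w := by
  rw [fr_le_iff]
  exact Int.floor_le_floor (by
    have := (Real.logb_le_logb one_lt_two hu (lt_of_lt_of_le hu h)).2 h
    linarith)

lemma fr_two_mul (r : ℝ) {w : ℝ} (hw : 0 < w) : fr r (2 * w) = 2 * fr r w := by
  have h : Real.logb 2 (2 * w) = 1 + Real.logb 2 w := by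
    rw [Real.logb_mul two_ne_zero (ne_of_gt hw), Real.logb_self_eq_one one_lt_two]
  rw [fr, fr, h]
  have : (1 : ℝ) + Real.logb 2 w - r = (Real.logb 2 w - r) + 1 := by ring
  rw [this, Int.floor_add_one]
  push_cast
  rw [show r + (↑⌊Real.logb 2 w - r⌋ + 1) = (r + ↑⌊Real.logb 2 w - r⌋) + 1 by ring,
    Real.rpow_add two_pos, Real.rpow_one]
  ring

lemma fr_lt_two_mul (r : ℝ) {w : ℝ} (hw : 0 < w) : fr r w < fr r (2 * w) := by
  rw [fr_two_mul r hw]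
  nlinarith [fr_pos r w]

lemma floor_sub_of_le_fract {a r : ℝ} (h0 : 0 ≤ r) (h : r ≤ Int.fract a) : ⌊a - r⌋ = ⌊a⌋ := by
  have hfr : Int.fract a = a - ⌊a⌋ := rfl
  have h2 := Int.lt_floor_add_one a
  rw [Int.floor_eq_iff]
  constructor
  · rw [hfr] at h; linarith
  · push_cast; linarith

lemma floor_sub_of_fract_lt {a r : ℝ} (h : Int.fract a < r) (h1 : r < 1) : ⌊a - r⌋ = ⌊a⌋ - 1 := by
  have hfr : Int.fract a = a - ⌊a⌋ := rfl
  have h2 := Int.floor_le a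
  rw [hfr] at h
  rw [Int.floor_eq_iff]
  constructor
  · push_cast; linarith
  · push_cast; linarith

/-- Key measure lemma. -/
lemma floor_meas (a b : ℝ) :
    volume {r ∈ Set.Ico (0:ℝ) 1 | (⌊b - r⌋ : ℤ) < ⌊a - r⌋} ≤ ENNReal.ofReal (max 0 (min 1 (a - b))) := by
  rcases le_or_gt a b with hab | hab
  · have : {r ∈ Set.Ico (0:ℝ) 1 | (⌊b - r⌋ : ℤ) < ⌊a - r⌋} = ∅ := by
      ext r
      simp only [Set.mem_setOf_eq, Set.mem_empty_iff_false, iff_false, not_and]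
      intro _
      exact not_lt.2 (Int.floor_le_floor (by linarith))
    rw [this]; simp
  rcases le_or_gt 1 (a - b) with h1 | h1
  · calc volume {r ∈ Set.Ico (0:ℝ) 1 | (⌊b - r⌋ : ℤ) < ⌊a - r⌋}
        ≤ volume (Set.Ico (0:ℝ) 1) := measure_mono (fun r hr => hr.1)
      _ = ENNReal.ofReal 1 := by rw [Real.volume_Ico]; norm_num
      _ ≤ _ := by
          apply ENNReal.ofReal_le_ofReal
          rw [le_max_iff]; right; rw [le_min_iff]; exact ⟨le_refl 1, h1⟩
  have hRHS : ENNReal.ofReal (max 0 (min 1 (a - b))) = ENNReal.ofReal (a - b) := by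
    rw [min_eq_right h1.le, max_eq_right (by linarith : (0:ℝ) ≤ a - b)]
  rw [hRHS]
  have hfl : ⌊a⌋ = ⌊b⌋ ∨ ⌊a⌋ = ⌊b⌋ + 1 := by
    have h2 : ⌊b⌋ ≤ ⌊a⌋ := Int.floor_le_floor hab.le
    have h3 : ⌊a⌋ ≤ ⌊b⌋ + 1 := by
      have : ⌊a⌋ ≤ ⌊b + 1⌋ := Int.floor_le_floor (by linarith)
      rwa [Int.floor_add_one] at this
    omega
  have hfa0 : 0 ≤ Int.fract a := Int.fract_nonneg a
  have hfb0 : 0 ≤ Int.fract b := Int.fract_nonneg b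
  have hfa1 : Int.fract a < 1 := Int.fract_lt_one a
  have hfb1 : Int.fract b < 1 := Int.fract_lt_one b
  have hfra : Int.fract a = a - ⌊a⌋ := rfl
  have hfrb : Int.fract b = b - ⌊b⌋ := rfl
  rcases hfl with heq | hsucc
  · have hsub : {r ∈ Set.Ico (0:ℝ) 1 | (⌊b - r⌋ : ℤ) < ⌊a - r⌋} ⊆ Set.Ioc (Int.fract b) (Int.fract a) := by
      rintro r ⟨⟨hr0, hr1⟩, hlt⟩
      constructor
      · by_contra hc
        push_neg at hc
        rw [floor_sub_of_le_fract hr0 hc] at hlt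
        have : ⌊a - r⌋ ≤ ⌊a⌋ := by
          rcases le_or_gt r (Int.fract a) with h | h
          · rw [floor_sub_of_le_fract hr0 h]
          · rw [floor_sub_of_fract_lt h hr1]; omega
        omega
      · by_contra hc
        push_neg at hc
        rw [floor_sub_of_fract_lt hc hr1] at hlt
        have : ⌊b⌋ - 1 ≤ ⌊b - r⌋ := by
          rcases le_or_gt r (Int.fract b) with h | h
          · rw [floor_sub_of_le_fract hr0 h]; omega
          · rw [floor_sub_of_fract_lt h hr1]
        omega
    calc volume _ ≤ volume (Set.Ioc (Int.fract b) (Int.fract a)) := measure_mono hsub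
      _ = ENNReal.ofReal (Int.fract a - Int.fract b) := Real.volume_Ioc
      _ = ENNReal.ofReal (a - b) := by rw [hfra, hfrb, heq]; ring_nf
  · have hfab : Int.fract a ≤ Int.fract b := by rw [hfra, hfrb]; push_cast [hsucc]; linarith
    have hsub : {r ∈ Set.Ico (0:ℝ) 1 | (⌊b - r⌋ : ℤ) < ⌊a - r⌋}
        ⊆ Set.Ico (0:ℝ) 1 \ Set.Ioc (Int.fract a) (Int.fract b) := by
      rintro r ⟨⟨hr0, hr1⟩, hlt⟩
      refine ⟨⟨hr0, hr1⟩, ?_⟩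
      rintro ⟨hc1, hc2⟩
      rw [floor_sub_of_fract_lt hc1 hr1, floor_sub_of_le_fract hr0 hc2] at hlt
      omega
    have hIoc : Set.Ioc (Int.fract a) (Int.fract b) ⊆ Set.Ico (0:ℝ) 1 := by
      rintro r ⟨h1', h2'⟩
      exact ⟨le_of_lt (lt_of_le_of_lt hfa0 h1'), lt_of_le_of_lt h2' hfb1⟩
    calc volume _ ≤ volume (Set.Ico (0:ℝ) 1 \ Set.Ioc (Int.fract a) (Int.fract b)) := measure_mono hsub
      _ = volume (Set.Ico (0:ℝ) 1) - volume (Set.Ioc (Int.fract a) (Int.fract b)) :=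
          measure_diff hIoc measurableSet_Ioc.nullMeasurableSet (by
            rw [Real.volume_Ioc]; exact ENNReal.ofReal_ne_top)
      _ = ENNReal.ofReal (1 - (Int.fract b - Int.fract a)) := by
          rw [Real.volume_Ico, Real.volume_Ioc,
            ← ENNReal.ofReal_sub _ (by linarith : (0:ℝ) ≤ Int.fract b - Int.fract a)]
          norm_num
      _ = ENNReal.ofReal (a - b) := by
          congr 1
          rw [hfra, hfrb]; push_cast [hsucc]; ring

lemma strict_meas (u w : ℝ) (hu : 0 < u) (hw : 0 < w) :
    volume ({r : ℝ | fr r u < fr r w} ∩ Set.Ico (0:ℝ) 1) ≤ ENNReal.ofReal (logdag (w / u)) := by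
  have h1 : {r : ℝ | fr r u < fr r w} ∩ Set.Ico (0:ℝ) 1
      = {r ∈ Set.Ico (0:ℝ) 1 | (⌊Real.logb 2 u - r⌋:ℤ) < ⌊Real.logb 2 w - r⌋} := by
    ext r
    simp only [Set.mem_inter_iff, Set.mem_setOf_eq]
    rw [fr_lt_iff]
    tauto
  rw [h1]
  have h2 : logdag (w/u) = max 0 (min 1 (Real.logb 2 w - Real.logb 2 u)) := by
    rw [logdag, Real.logb_div (ne_of_gt hw) (ne_of_gt hu)]
  rw [h2]
  exact floor_meas _ _

noncomputable def fj (j : ℕ) : ℝ := (((j:ℝ)+1) * ((j:ℝ)+2))⁻¹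

lemma fj_nonneg (j : ℕ) : 0 ≤ fj j := by unfold fj; positivity

lemma fj_eq (j : ℕ) : fj j = ((j:ℝ)+1)⁻¹ - ((j:ℝ)+2)⁻¹ := by
  unfold fj
  have h1 : (j:ℝ)+1 ≠ 0 := by positivity
  have h2 : (j:ℝ)+2 ≠ 0 := by positivity
  field_simp
  ring

lemma fj_anti {a b : ℕ} (h : a ≤ b) : fj b ≤ fj a := by
  unfold fj
  have : (a:ℝ) ≤ b := Nat.cast_le.2 h
  apply inv_anti₀ (by positivity)
  nlinarith

lemma telescope : ∀ K m : ℕ, m ≤ K → ∑ j ∈ Finset.Ico m K, fj j = ((m:ℝ)+1)⁻¹ - ((K:ℝ)+1)⁻¹ := by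
  intro K
  induction K with
  | zero => intro m hm; interval_cases m; simp
  | succ K ih =>
    intro m hm
    rcases Nat.lt_or_ge m (K+1) with h | h
    · have hmK : m ≤ K := by omega
      rw [Finset.sum_Ico_succ_top hmK, ih m hmK, fj_eq]
      push_cast
      ring
    · have : m = K + 1 := by omega
      subst this
      simp

lemma L1 : ∀ K : ℕ, ∀ A : Finset ℕ, A ⊆ Finset.range K →
    ∑ j ∈ Finset.Ico (K - A.card) K, fj j ≤ ∑ j ∈ A, fj j := by
  intro K
  induction K with
  | zero => intro A hA; simp [Finset.subset_empty.1 (by simpa using hA)]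
  | succ K ih =>
    intro A hA
    by_cases hK : K ∈ A
    · have hsub : A.erase K ⊆ Finset.range K := by
        intro x hx
        have hx1 := Finset.mem_of_mem_erase hx
        have hx2 := Finset.ne_of_mem_erase hx
        have := hA hx1
        simp only [Finset.mem_range] at this ⊢
        omega
      have hcard : A.card = (A.erase K).card + 1 := by
        rw [Finset.card_erase_of_mem hK]
        have : 1 ≤ A.card := Finset.card_pos.2 ⟨K, hK⟩
        omega
      have h1 := ih (A.erase K) hsub
      have hA1 : 1 ≤ A.card := Finset.card_pos.2 ⟨K, hK⟩
      have hAle : A.card ≤ K + 1 := by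
        have := Finset.card_le_card hA
        simpa using this
      have hsplit : ∑ j ∈ A, fj j = fj K + ∑ j ∈ A.erase K, fj j :=
        (Finset.add_sum_erase _ _ hK).symm
      have hIco : Finset.Ico (K + 1 - A.card) (K+1) = insert K (Finset.Ico (K + 1 - A.card) K) := by
        ext x
        simp only [Finset.mem_Ico, Finset.mem_insert]
        omega
      rw [hIco, Finset.sum_insert (by simp), hsplit]
      have : K + 1 - A.card = K - (A.erase K).card := by omega
      rw [this]
      linarith
    · have hsub : A ⊆ Finset.range K := by
        intro x hx
        have := hA hx
        simp only [Finset.mem_range] at this ⊢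
        rcases Nat.lt_or_ge x K with h | h
        · exact h
        · exfalso; have : x = K := by omega
          subst this; exact hK hx
      have h1 := ih A hsub
      have hAle : A.card ≤ K := by simpa using Finset.card_le_card hsub
      refine le_trans ?_ h1
      by_cases ha0 : A.card = 0
      · simp [ha0]
      · rw [Finset.sum_Ico_eq_sum_range, Finset.sum_Ico_eq_sum_range]
        have e1 : K - (K - A.card) = A.card := by omega
        have e2 : K + 1 - (K + 1 - A.card) = A.card := by omega
        rw [e1, e2]
        apply Finset.sum_le_sum
        intro x hx
        apply fj_anti
        omega

lemma arith_main (k ι : ℕ) (A : Finset ℕ) (hA : A ⊆ Finset.range k)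
    (hiA : ι < k → ι ∉ A) (d : ℕ) (hd : d = (if ι < k then k - 1 else k) - A.card) :
    ((d:ℝ)+1)⁻¹ ≤ fj ι + ((k:ℝ)+1)⁻¹ + ∑ j ∈ A, fj j := by
  have hak : A.card ≤ k := by simpa using Finset.card_le_card hA
  have hL1 := le_trans (le_of_eq (telescope k (k - A.card) (by omega)).symm) (L1 k A hA)
  by_cases hik : ι < k
  · have hiA' := hiA hik
    have hABsub : insert ι A ⊆ Finset.range k := by
      intro x hx
      rcases Finset.mem_insert.1 hx with h | h
      · subst h; exact Finset.mem_range.2 hik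
      · exact hA h
    have hacard : A.card ≤ k - 1 := by
      have h2 : (insert ι A).card = A.card + 1 := Finset.card_insert_of_notMem hiA'
      have h3 := Finset.card_le_card hABsub
      simp only [Finset.card_range] at h3
      omega
    rw [if_pos hik] at hd
    have hd' : d = k - 1 - A.card := hd
    by_cases hcase : ι + 1 + A.card ≤ k
    · have hfj : fj ι ≥ ((k - A.card:ℕ):ℝ)⁻¹ - (((k - A.card:ℕ):ℝ)+1)⁻¹ := by
        have h5 : fj (k - A.card - 1) ≤ fj ι := fj_anti (by omega)
        rw [fj_eq] at h5
        have : ((k - A.card - 1 : ℕ):ℝ) = ((k - A.card:ℕ):ℝ) - 1 := by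
          rw [Nat.cast_sub (by omega)]
          norm_num
        rw [this] at h5
        calc ((k - A.card:ℕ):ℝ)⁻¹ - (((k - A.card:ℕ):ℝ)+1)⁻¹
            = (((k - A.card:ℕ):ℝ) - 1 + 1)⁻¹ - (((k - A.card:ℕ):ℝ) - 1 + 2)⁻¹ := by ring_nf
          _ ≤ fj ι := h5
      have hdm : ((d:ℝ)+1) = ((k - A.card : ℕ):ℝ) := by
        have hnat : d + 1 = k - A.card := by omega
        rw [← hnat]
        push_cast
        ring
      rw [hdm]
      have hcast : (((k - A.card:ℕ):ℝ)+1)⁻¹ - ((k:ℝ)+1)⁻¹ ≤ ∑ j ∈ A, fj j := by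
        have : ∑ j ∈ Finset.Ico (k - A.card) k, fj j = (((k - A.card:ℕ):ℝ)+1)⁻¹ - ((k:ℝ)+1)⁻¹ :=
          telescope k (k - A.card) (by omega)
        linarith [L1 k A hA]
      linarith
    · have hins := L1 k (insert ι A) hABsub
      have hcardins : (insert ι A).card = A.card + 1 := Finset.card_insert_of_notMem hiA'
      have htel : ∑ j ∈ Finset.Ico (k - (A.card + 1)) k, fj j
          = (((k - (A.card+1):ℕ):ℝ)+1)⁻¹ - ((k:ℝ)+1)⁻¹ := telescope k _ (by omega)
      rw [hcardins, htel] at hins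
      rw [Finset.sum_insert hiA'] at hins
      have hdm : ((d:ℝ)+1) = ((k - (A.card+1) : ℕ):ℝ) + 1 := by
        have hnat : k - (A.card + 1) = d := by omega
        rw [hnat]
      rw [hdm]
      linarith
  · rw [if_neg hik] at hd
    have hdm : ((d:ℝ)+1) = ((k - A.card : ℕ):ℝ) + 1 := by rw [hd]
    rw [hdm]
    have := fj_nonneg ι
    linarith

lemma perm_count {n : ℕ} (i : Fin n) (T : Finset (Fin n)) (hiT : i ∉ T) :
    ((univ : Finset (Equiv.Perm (Fin n))).filter (fun π => ∀ j ∈ T, π j < π i)).card * (T.card + 1)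
      = n.factorial := by
  classical
  set F : Finset (Fin n) := insert i T with hF
  have hiF : i ∈ F := Finset.mem_insert_self i T
  have hcardF : F.card = T.card + 1 := Finset.card_insert_of_notMem hiT
  set E : Fin n → Finset (Equiv.Perm (Fin n)) :=
    fun t => (univ : Finset (Equiv.Perm (Fin n))).filter (fun π => ∀ j ∈ F, j ≠ t → π j < π t) with hE
  have hEi : (univ : Finset (Equiv.Perm (Fin n))).filter (fun π => ∀ j ∈ T, π j < π i) = E i := by
    ext π
    simp only [hE, Finset.mem_filter, Finset.mem_univ, true_and]
    constructor
    · intro h j hj hji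
      rcases Finset.mem_insert.1 hj with h' | h'
      · exact absurd h' hji
      · exact h j h'
    · intro h j hj
      exact h j (Finset.mem_insert_of_mem hj) (fun he => hiT (he ▸ hj))
  have hsame : ∀ t ∈ F, (E t).card = (E i).card := by
    intro t htF
    rcases eq_or_ne t i with rfl | hti
    · rfl
    · apply Finset.card_bij' (fun σ _ => σ * Equiv.swap i t) (fun π _ => π * Equiv.swap i t)
      · intro σ hσ
        simp only [hE, Finset.mem_filter, Finset.mem_univ, true_and] at hσ ⊢
        intro j hj hji
        have h1 : (σ * Equiv.swap i t) i = σ t := by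
          simp [Equiv.Perm.mul_apply, Equiv.swap_apply_left]
        rw [h1]
        by_cases hjt : j = t
        · have : (σ * Equiv.swap i t) j = σ i := by
            rw [hjt]; simp [Equiv.Perm.mul_apply, Equiv.swap_apply_right]
          rw [this]
          exact hσ i hiF (Ne.symm hti)
        · have : (σ * Equiv.swap i t) j = σ j := by
            simp [Equiv.Perm.mul_apply, Equiv.swap_apply_of_ne_of_ne hji hjt]
          rw [this]
          exact hσ j hj hjt
      · intro π hπ
        simp only [hE, Finset.mem_filter, Finset.mem_univ, true_and] at hπ ⊢
        intro j hj hjt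
        have h1 : (π * Equiv.swap i t) t = π i := by
          simp [Equiv.Perm.mul_apply, Equiv.swap_apply_right]
        rw [h1]
        by_cases hji : j = i
        · have : (π * Equiv.swap i t) j = π t := by
            rw [hji]; simp [Equiv.Perm.mul_apply, Equiv.swap_apply_left]
          rw [this]
          exact hπ t (Finset.mem_insert_of_mem (by
            rcases Finset.mem_insert.1 htF with h' | h'
            · exact absurd h' hti
            · exact h')) hti
        · have : (π * Equiv.swap i t) j = π j := by
            simp [Equiv.Perm.mul_apply, Equiv.swap_apply_of_ne_of_ne hji hjt]
          rw [this]
          exact hπ j hj hji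
      · intro σ _
        simp [mul_assoc]
      · intro π _
        simp [mul_assoc]
  have hdisj : ∀ t1 ∈ F, ∀ t2 ∈ F, t1 ≠ t2 → Disjoint (E t1) (E t2) := by
    intro t1 h1 t2 h2 hne
    rw [Finset.disjoint_left]
    intro π hπ1 hπ2
    simp only [hE, Finset.mem_filter, Finset.mem_univ, true_and] at hπ1 hπ2
    exact absurd (hπ1 t2 h2 (Ne.symm hne)) (not_lt.2 (hπ2 t1 h1 hne).le)
  have hcover : F.biUnion E = (univ : Finset (Equiv.Perm (Fin n))) := by
    apply Finset.eq_univ_of_forall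
    intro π
    rw [Finset.mem_biUnion]
    obtain ⟨t, htF, hmax⟩ := Finset.exists_max_image F π ⟨i, hiF⟩
    refine ⟨t, htF, ?_⟩
    simp only [hE, Finset.mem_filter, Finset.mem_univ, true_and]
    intro j hj hjt
    exact lt_of_le_of_ne (hmax j hj) (fun he => hjt (π.injective he))
  have hcount : F.card * (E i).card = n.factorial := by
    have h1 : (F.biUnion E).card = ∑ t ∈ F, (E t).card := Finset.card_biUnion hdisj
    rw [hcover] at h1
    have h2 : ∑ t ∈ F, (E t).card = F.card * (E i).card := by
      rw [Finset.sum_congr rfl hsame, Finset.sum_const, smul_eq_mul]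
    rw [← h2, ← h1, Finset.card_univ, Fintype.card_perm, Fintype.card_fin]
  rw [hEi, ← hcardF]
  rw [mul_comm] at hcount
  exact hcount

lemma meas_rel (x y : ℝ) (P : ℤ → ℤ → Prop) :
    MeasurableSet {r : ℝ | P ⌊x - r⌋ ⌊y - r⌋} := by
  have hm : Measurable (fun r : ℝ => ((⌊x - r⌋ : ℤ), (⌊y - r⌋ : ℤ))) := by
    apply Measurable.prodMk <;>
      exact Int.measurable_floor.comp (measurable_const.sub measurable_id)
  have : {r : ℝ | P ⌊x - r⌋ ⌊y - r⌋} = (fun r : ℝ => ((⌊x - r⌋ : ℤ), (⌊y - r⌋ : ℤ))) ⁻¹' {p | P p.1 p.2} := rfl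
  rw [this]
  exact hm ((Set.to_countable _).measurableSet)

lemma meas_fr_lt (u w : ℝ) : MeasurableSet {r : ℝ | fr r u < fr r w} := by
  have : {r : ℝ | fr r u < fr r w}
      = {r : ℝ | (fun m m' : ℤ => m < m') ⌊Real.logb 2 u - r⌋ ⌊Real.logb 2 w - r⌋} := by
    ext r; exact fr_lt_iff r u w
  rw [this]
  exact meas_rel (Real.logb 2 u) (Real.logb 2 w) (fun m m' => m < m')

lemma meas_lexGt {n : ℕ} (π : Equiv.Perm (Fin n)) (i j : Fin n) (a b : ℝ) :
    MeasurableSet {r : ℝ | lexGt π i j (fr r a) (fr r b)} := by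
  have : {r : ℝ | lexGt π i j (fr r a) (fr r b)}
      = {r : ℝ | (fun m m' : ℤ => m' < m ∨ (m = m' ∧ π j < π i)) ⌊Real.logb 2 a - r⌋ ⌊Real.logb 2 b - r⌋} := by
    ext r
    simp only [Set.mem_setOf_eq, lexGt]
    rw [fr_lt_iff, fr_eq_iff]
  rw [this]
  exact meas_rel (Real.logb 2 a) (Real.logb 2 b) (fun m m' => m' < m ∨ (m = m' ∧ π j < π i))

lemma meas_cand {n : ℕ} {S : Fin n → Type*} [∀ i, Nonempty (S i)]
    (v : Fin n → ((i : Fin n) → S i) → ℝ) (s : (i : Fin n) → S i)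
    (π : Equiv.Perm (Fin n)) (i : Fin n) :
    MeasurableSet {r : ℝ | IsCandidate v s r π i} := by
  have : {r : ℝ | IsCandidate v s r π i}
      = ⋂ j : Fin n, ⋂ (_ : j ≠ i), {r | lexGt π i j (fr r (v i s)) (fr r (lowEst (v j) s i))} := by
    ext r
    simp only [Set.mem_setOf_eq, Set.mem_iInter, IsCandidate]
  rw [this]
  exact MeasurableSet.iInter fun j => MeasurableSet.iInter fun _ => meas_lexGt π i j _ _

lemma lowEst_le {n : ℕ} {S : Fin n → Type*} [∀ i, Nonempty (S i)]
    (w : ((i : Fin n) → S i) → ℝ) (hnn : ∀ t, 0 ≤ w t) (s : (i : Fin n) → S i) (i : Fin n) :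
    lowEst w s i ≤ w s := by
  apply csInf_le
  · exact ⟨0, fun x ⟨o, ho⟩ => ho ▸ hnn _⟩
  · exact ⟨s i, by simp⟩

lemma Dcard {n : ℕ} (k : ℕ) (hk : k ≤ n) (i : Fin n) :
    ((univ : Finset (Fin n)).filter (fun j => j.val < k ∧ j ≠ i)).card
      = if i.val < k then k - 1 else k := by
  classical
  have hbase : ((univ : Finset (Fin n)).filter (fun j => j.val < k)).card = k := by
    have himg : ((univ : Finset (Fin n)).filter (fun j => j.val < k)).image Fin.val = Finset.range k := by
      ext m
      simp only [Finset.mem_image, Finset.mem_filter, Finset.mem_univ, true_and, Finset.mem_range]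
      constructor
      · rintro ⟨j, hj, rfl⟩; exact hj
      · intro hm; exact ⟨⟨m, lt_of_lt_of_le hm hk⟩, hm, rfl⟩
    have h2 := Finset.card_image_of_injective
      ((univ : Finset (Fin n)).filter (fun j => j.val < k)) Fin.val_injective
    rw [himg, Finset.card_range] at h2
    exact h2.symm
  by_cases hik : i.val < k
  · rw [if_pos hik]
    have he : ((univ : Finset (Fin n)).filter (fun j => j.val < k ∧ j ≠ i))
        = ((univ : Finset (Fin n)).filter (fun j => j.val < k)).erase i := by
      ext j
      simp only [Finset.mem_filter, Finset.mem_univ, true_and, Finset.mem_erase]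
      tauto
    rw [he, Finset.card_erase_of_mem (by simp [hik]), hbase]
  · rw [if_neg hik]
    have he : ((univ : Finset (Fin n)).filter (fun j => j.val < k ∧ j ≠ i))
        = (univ : Finset (Fin n)).filter (fun j => j.val < k) := by
      ext j
      simp only [Finset.mem_filter, Finset.mem_univ, true_and]
      constructor
      · exact fun h => h.1
      · intro h
        exact ⟨h, fun he' => hik (he' ▸ h)⟩
    rw [he, hbase]

end Aux

/-- Candidate-probability bound. -/
theorem candidate_probability_bound {n : ℕ} {S : Fin n → Type*} [∀ i, Nonempty (S i)]
    (hn : 0 < n)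
    (v : Fin n → ((i : Fin n) → S i) → ℝ)
    (hnonneg : ∀ j s, 0 ≤ v j s)
    (s : (i : Fin n) → S i)
    (hsorted : ∀ i j : Fin n, i ≤ j → v j s ≤ v i s)
    (hpos : ∀ i, 0 < v i s)
    (hlowpos : ∀ j i, 0 < lowEst (v j) s i)
    (k : ℕ) (hk : k ≤ n)
    (hkdef : ∀ i : Fin n, (i.val < k ↔ v ⟨0, hn⟩ s / 2 < v i s))
    (i : Fin n) :
    Ecand v s i
      ≤ 1 / (((i.val : ℝ) + 1) * ((i.val : ℝ) + 2))
        + logdag (2 * v i s / lowEst (v ⟨0, hn⟩) s i) / ((k : ℝ) + 1)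
        + ∑ j ∈ Finset.univ.filter (fun j : Fin n => j.val < k ∧ j ≠ i),
            logdag (v i s / lowEst (v j) s i) / (((j.val : ℝ) + 1) * ((j.val : ℝ) + 2)) := by
  classical
  set z : Fin n := ⟨0, hn⟩ with hz
  set lw : Fin n → ℝ := fun j => lowEst (v j) s i with hlw
  set D : Finset (Fin n) := Finset.univ.filter (fun j : Fin n => j.val < k ∧ j ≠ i) with hD
  set Wset : Set ℝ := {r | fr r (lw z) < fr r (2 * v i s)} with hWset
  set St : Fin n → Set ℝ := fun j => {r | fr r (lw j) < fr r (v i s)} with hSt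
  set N : ℝ → ℕ := fun r =>
    ((univ : Finset (Equiv.Perm (Fin n))).filter (fun π => IsCandidate v s r π i)).card with hN
  have hk1 : 0 < k := by
    have := (hkdef z).2 (by have := hpos z; linarith)
    omega
  have hWmeas : MeasurableSet Wset := meas_fr_lt _ _
  have hStmeas : ∀ j, MeasurableSet (St j) := fun j => meas_fr_lt _ _
  have hCmeas : ∀ π : Equiv.Perm (Fin n), MeasurableSet {r : ℝ | IsCandidate v s r π i} :=
    fun π => meas_cand v s π i
  have hDcard : D.card = if i.val < k then k - 1 else k := Dcard k hk i
  -- pointwise key inequality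
  have key : ∀ r : ℝ, (N r : ℝ≥0∞) ≤ (n.factorial : ℝ≥0∞) *
      (ENNReal.ofReal (fj i.val) + ENNReal.ofReal ((k:ℝ)+1)⁻¹ * Wset.indicator 1 r
        + ∑ j ∈ D, ENNReal.ofReal (fj j.val) * (St j).indicator 1 r) := by
    intro r
    by_cases hG : ∀ j, j ≠ i → fr r (lw j) ≤ fr r (v i s)
    · -- the tie set
      set T : Finset (Fin n) :=
        Finset.univ.filter (fun j : Fin n => j ≠ i ∧ fr r (v i s) = fr r (lw j)) with hT
      have hiT : i ∉ T := by simp [hT]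
      have hfilt : ((univ : Finset (Equiv.Perm (Fin n))).filter (fun π => IsCandidate v s r π i))
          = (univ : Finset (Equiv.Perm (Fin n))).filter (fun π => ∀ j ∈ T, π j < π i) := by
        ext π
        simp only [Finset.mem_filter, Finset.mem_univ, true_and]
        constructor
        · intro hc j hj
          rw [hT, Finset.mem_filter] at hj
          obtain ⟨-, hji, heq⟩ := hj
          rcases hc j hji with hlt | ⟨-, hp⟩
          · rw [← heq] at hlt
            exact absurd hlt (lt_irrefl _)
          · exact hp
        · intro hp j hji
          rcases lt_or_eq_of_le (hG j hji) with hlt | heq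
          · exact Or.inl hlt
          · exact Or.inr ⟨heq.symm, hp j (by
              rw [hT, Finset.mem_filter]
              exact ⟨Finset.mem_univ j, hji, heq.symm⟩)⟩
      have hcount : N r * (T.card + 1) = n.factorial := by
        rw [hN]
        simp only
        rw [hfilt]
        exact perm_count i T hiT
      set A : Finset (Fin n) := D.filter (fun j => fr r (lw j) < fr r (v i s)) with hA
      have hAD : A ⊆ D := Finset.filter_subset _ _
      have hJT : D \ A ⊆ T := by
        intro j hj
        rw [Finset.mem_sdiff] at hj
        obtain ⟨hjD, hjA⟩ := hj
        have hjlt : ¬ fr r (lw j) < fr r (v i s) := by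
          intro h
          exact hjA (by rw [hA, Finset.mem_filter]; exact ⟨hjD, h⟩)
        have hji : j ≠ i := (Finset.mem_filter.1 hjD).2.2
        rw [hT, Finset.mem_filter]
        exact ⟨Finset.mem_univ j, hji, ((hG j hji).lt_or_eq.resolve_left hjlt).symm⟩
      have hcard1 : D.card - A.card ≤ T.card := by
        have h := Finset.card_le_card hJT
        rwa [Finset.card_sdiff_of_subset hAD] at h
      set d : ℕ := D.card - A.card with hd
      have hNd : N r * (d + 1) ≤ n.factorial := by
        calc N r * (d+1) ≤ N r * (T.card + 1) := Nat.mul_le_mul_left _ (by omega)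
        _ = n.factorial := hcount
      have harith : ((d:ℝ)+1)⁻¹ ≤ fj i.val + ((k:ℝ)+1)⁻¹ + ∑ j ∈ A, fj j.val := by
        have himg : (A.image Fin.val) ⊆ Finset.range k := by
          intro x hx
          rw [Finset.mem_image] at hx
          obtain ⟨j, hj, rfl⟩ := hx
          exact Finset.mem_range.2 (Finset.mem_filter.1 (hAD hj)).2.1
        have hicard : (A.image Fin.val).card = A.card :=
          Finset.card_image_of_injective A Fin.val_injective
        have hni : i.val < k → i.val ∉ A.image Fin.val := by
          intro _ hx
          rw [Finset.mem_image] at hx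
          obtain ⟨j, hj, hjv⟩ := hx
          exact (Finset.mem_filter.1 (hAD hj)).2.2 (Fin.val_injective hjv)
        have := arith_main k i.val (A.image Fin.val) himg hni d (by rw [hd, hicard, hDcard])
        rwa [Finset.sum_image (fun a _ b _ h => Fin.val_injective h)] at this
      have hWr : r ∈ Wset := by
        have h0 : fr r (lw z) ≤ fr r (v i s) := by
          rcases eq_or_ne z i with hzi | hzi
          · rw [hzi, hlw]
            exact fr_mono r (hlowpos i i) (lowEst_le (v i) (hnonneg i) s i)
          · exact hG z hzi
        exact lt_of_le_of_lt h0 (fr_lt_two_mul r (hpos i))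
      have hreal : (N r : ℝ) ≤ (n.factorial : ℝ) * (fj i.val + ((k:ℝ)+1)⁻¹ + ∑ j ∈ A, fj j.val) := by
        have hd1 : (0:ℝ) < (d:ℝ)+1 := by positivity
        have hcast : (N r : ℝ) * ((d:ℝ)+1) ≤ (n.factorial:ℝ) := by exact_mod_cast hNd
        have h1 : (N r : ℝ) ≤ (n.factorial:ℝ) * ((d:ℝ)+1)⁻¹ := by
          rw [← div_eq_mul_inv, le_div_iff₀ hd1]
          exact hcast
        refine h1.trans ?_
        exact mul_le_mul_of_nonneg_left harith (by positivity)
      calc (N r : ℝ≥0∞) = ENNReal.ofReal ((N r : ℝ)) := by rw [ENNReal.ofReal_natCast]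
        _ ≤ ENNReal.ofReal ((n.factorial : ℝ) * (fj i.val + ((k:ℝ)+1)⁻¹ + ∑ j ∈ A, fj j.val)) :=
            ENNReal.ofReal_le_ofReal hreal
        _ = (n.factorial : ℝ≥0∞)
            * ENNReal.ofReal (fj i.val + ((k:ℝ)+1)⁻¹ + ∑ j ∈ A, fj j.val) := by
            rw [ENNReal.ofReal_mul (by positivity), ENNReal.ofReal_natCast]
        _ ≤ _ := by
            refine mul_le_mul_of_nonneg_left ?_ (by simp)
            have hsum_nonneg : (0:ℝ) ≤ ∑ j ∈ A, fj j.val :=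
              Finset.sum_nonneg (fun j _ => fj_nonneg _)
            rw [ENNReal.ofReal_add (add_nonneg (fj_nonneg _) (by positivity)) hsum_nonneg,
              ENNReal.ofReal_add (fj_nonneg _) (by positivity)]
            rw [Set.indicator_of_mem hWr]
            refine add_le_add (add_le_add le_rfl (by simp)) ?_
            rw [ENNReal.ofReal_sum_of_nonneg (fun j _ => fj_nonneg _)]
            calc ∑ j ∈ A, ENNReal.ofReal (fj j.val)
                = ∑ j ∈ A, ENNReal.ofReal (fj j.val) * (St j).indicator 1 r := by
                  refine Finset.sum_congr rfl (fun j hj => ?_)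
                  have hr : r ∈ St j := (Finset.mem_filter.1 hj).2
                  rw [Set.indicator_of_mem hr, Pi.one_apply, mul_one]
              _ ≤ ∑ j ∈ D, ENNReal.ofReal (fj j.val) * (St j).indicator 1 r :=
                  Finset.sum_le_sum_of_subset hAD
    · -- not G: no candidates at all
      push_neg at hG
      obtain ⟨j, hji, hlt⟩ := hG
      have hN0 : N r = 0 := by
        rw [hN]
        simp only
        rw [Finset.card_eq_zero, Finset.filter_eq_empty_iff]
        intro π _
        intro hc
        rcases hc j hji with h | ⟨heq, -⟩
        · exact absurd h (not_lt.2 hlt.le)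
        · rw [heq] at hlt
          exact lt_irrefl _ hlt
      rw [hN0]
      simp
  -- sum over permutations as an integral
  have step2 : (∑ π : Equiv.Perm (Fin n), volume {r ∈ Set.Ico (0:ℝ) 1 | IsCandidate v s r π i})
      = ∫⁻ r in Set.Ico (0:ℝ) 1, (N r : ℝ≥0∞) := by
    have h1 : ∀ π : Equiv.Perm (Fin n), volume {r ∈ Set.Ico (0:ℝ) 1 | IsCandidate v s r π i}
        = ∫⁻ r in Set.Ico (0:ℝ) 1, ({r' : ℝ | IsCandidate v s r' π i}.indicator (fun _ => (1:ℝ≥0∞)) r) := by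
      intro π
      rw [lintegral_indicator (hCmeas π)]
      rw [Measure.restrict_restrict (hCmeas π), setLIntegral_one]
      congr 1
      ext r
      simp only [Set.mem_inter_iff, Set.mem_setOf_eq, Set.mem_Ico]
      tauto
    rw [Finset.sum_congr rfl (fun π _ => h1 π)]
    rw [← lintegral_finset_sum _ (fun π _ => (measurable_const.indicator (hCmeas π)))]
    apply lintegral_congr
    intro r
    rw [hN]
    simp only
    rw [← Finset.sum_boole]
    refine Finset.sum_congr rfl (fun π _ => ?_)
    rw [Set.indicator_apply]
    simp [Set.mem_setOf_eq]
  -- measurability of the bounding function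
  have hindW : Measurable (Wset.indicator (1 : ℝ → ℝ≥0∞)) := measurable_const.indicator hWmeas
  have hindSt : ∀ j, Measurable ((St j).indicator (1 : ℝ → ℝ≥0∞)) :=
    fun j => measurable_const.indicator (hStmeas j)
  have hHmeas : Measurable (fun r => ENNReal.ofReal (fj i.val)
      + ENNReal.ofReal ((k:ℝ)+1)⁻¹ * Wset.indicator 1 r
      + ∑ j ∈ D, ENNReal.ofReal (fj j.val) * (St j).indicator 1 r) := by
    apply Measurable.add
    · exact measurable_const.add (hindW.const_mul _)
    · exact Finset.measurable_sum _ (fun j _ => (hindSt j).const_mul _)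
  -- the integral bound
  have step3 : ∫⁻ r in Set.Ico (0:ℝ) 1, (N r : ℝ≥0∞)
      ≤ (n.factorial : ℝ≥0∞) * (ENNReal.ofReal (fj i.val)
        + ENNReal.ofReal ((k:ℝ)+1)⁻¹ * ENNReal.ofReal (logdag (2 * v i s / lw z))
        + ∑ j ∈ D, ENNReal.ofReal (fj j.val) * ENNReal.ofReal (logdag (v i s / lw j))) := by
    calc ∫⁻ r in Set.Ico (0:ℝ) 1, (N r : ℝ≥0∞)
        ≤ ∫⁻ r in Set.Ico (0:ℝ) 1, (n.factorial : ℝ≥0∞) *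
            (ENNReal.ofReal (fj i.val) + ENNReal.ofReal ((k:ℝ)+1)⁻¹ * Wset.indicator 1 r
              + ∑ j ∈ D, ENNReal.ofReal (fj j.val) * (St j).indicator 1 r) :=
          lintegral_mono (fun r => key r)
      _ = (n.factorial : ℝ≥0∞) * ∫⁻ r in Set.Ico (0:ℝ) 1,
            (ENNReal.ofReal (fj i.val) + ENNReal.ofReal ((k:ℝ)+1)⁻¹ * Wset.indicator 1 r
              + ∑ j ∈ D, ENNReal.ofReal (fj j.val) * (St j).indicator 1 r) :=
          lintegral_const_mul _ hHmeas
      _ ≤ _ := by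
          refine mul_le_mul_of_nonneg_left ?_ (by simp)
          have hsplit : ∫⁻ r in Set.Ico (0:ℝ) 1,
              (ENNReal.ofReal (fj i.val) + ENNReal.ofReal ((k:ℝ)+1)⁻¹ * Wset.indicator 1 r
                + ∑ j ∈ D, ENNReal.ofReal (fj j.val) * (St j).indicator 1 r)
              = (∫⁻ _ in Set.Ico (0:ℝ) 1, ENNReal.ofReal (fj i.val))
                + (∫⁻ r in Set.Ico (0:ℝ) 1, ENNReal.ofReal ((k:ℝ)+1)⁻¹ * Wset.indicator 1 r)
                + (∫⁻ r in Set.Ico (0:ℝ) 1, ∑ j ∈ D, ENNReal.ofReal (fj j.val) * (St j).indicator 1 r) := by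
            rw [lintegral_add_left (f := fun r => ENNReal.ofReal (fj i.val) + ENNReal.ofReal ((k:ℝ)+1)⁻¹ * Wset.indicator 1 r)
              (measurable_const.add (hindW.const_mul _)),
              lintegral_add_left measurable_const]
          rw [hsplit]
          refine add_le_add (add_le_add ?_ ?_) ?_
          · rw [setLIntegral_const, Real.volume_Ico]
            simp
          · rw [lintegral_const_mul _ hindW, lintegral_indicator_one hWmeas,
              Measure.restrict_apply hWmeas]
            refine mul_le_mul_of_nonneg_left ?_ (by simp)
            exact strict_meas (lw z) (2 * v i s) (hlowpos z i) (by have := hpos i; linarith)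
          · rw [lintegral_finset_sum _ (fun j _ => (hindSt j).const_mul _)]
            refine Finset.sum_le_sum (fun j _ => ?_)
            rw [lintegral_const_mul _ (hindSt j), lintegral_indicator_one (hStmeas j),
              Measure.restrict_apply (hStmeas j)]
            refine mul_le_mul_of_nonneg_left ?_ (by simp)
            exact strict_meas (lw j) (v i s) (hlowpos j i) (hpos i)
  -- put everything together
  have hfin : ∀ π : Equiv.Perm (Fin n),
      volume {r ∈ Set.Ico (0:ℝ) 1 | IsCandidate v s r π i} ≠ ⊤ := by
    intro π
    have : volume {r ∈ Set.Ico (0:ℝ) 1 | IsCandidate v s r π i} ≤ volume (Set.Ico (0:ℝ) 1) :=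
      measure_mono (fun r hr => hr.1)
    rw [Real.volume_Ico] at this
    exact ne_top_of_le_ne_top ENNReal.ofReal_ne_top this
  have hRfin : (ENNReal.ofReal (fj i.val)
      + ENNReal.ofReal ((k:ℝ)+1)⁻¹ * ENNReal.ofReal (logdag (2 * v i s / lw z))
      + ∑ j ∈ D, ENNReal.ofReal (fj j.val) * ENNReal.ofReal (logdag (v i s / lw j))) ≠ ⊤ := by
    apply ENNReal.add_ne_top.2
    constructor
    · apply ENNReal.add_ne_top.2
      exact ⟨ENNReal.ofReal_ne_top, ENNReal.mul_ne_top ENNReal.ofReal_ne_top ENNReal.ofReal_ne_top⟩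
    · exact (ENNReal.sum_lt_top.2 (fun j _ =>
        (ENNReal.mul_ne_top ENNReal.ofReal_ne_top ENNReal.ofReal_ne_top).lt_top)).ne
  have hmain : (∑ π : Equiv.Perm (Fin n),
      (volume {r ∈ Set.Ico (0:ℝ) 1 | IsCandidate v s r π i}).toReal)
      ≤ (n.factorial : ℝ) * (fj i.val + ((k:ℝ)+1)⁻¹ * logdag (2 * v i s / lw z)
        + ∑ j ∈ D, fj j.val * logdag (v i s / lw j)) := by
    rw [← ENNReal.toReal_sum (fun π _ => hfin π)]
    have h := step2 ▸ step3
    have h2 := ENNReal.toReal_mono (ENNReal.mul_ne_top (ENNReal.natCast_ne_top _) hRfin) h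
    refine h2.trans_eq ?_
    rw [ENNReal.toReal_mul,
      show ((n.factorial : ℝ≥0∞)).toReal = (n.factorial : ℝ) from rfl]
    congr 1
    rw [ENNReal.toReal_add (by
        apply ENNReal.add_ne_top.2
        exact ⟨ENNReal.ofReal_ne_top, ENNReal.mul_ne_top ENNReal.ofReal_ne_top ENNReal.ofReal_ne_top⟩)
      (by exact (ENNReal.sum_lt_top.2 (fun j _ =>
        (ENNReal.mul_ne_top ENNReal.ofReal_ne_top ENNReal.ofReal_ne_top).lt_top)).ne),
      ENNReal.toReal_add ENNReal.ofReal_ne_top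
        (ENNReal.mul_ne_top ENNReal.ofReal_ne_top ENNReal.ofReal_ne_top),
      ENNReal.toReal_mul, ENNReal.toReal_sum (fun j _ =>
        ENNReal.mul_ne_top ENNReal.ofReal_ne_top ENNReal.ofReal_ne_top)]
    rw [ENNReal.toReal_ofReal (fj_nonneg _), ENNReal.toReal_ofReal (by positivity),
      ENNReal.toReal_ofReal (logdag_nonneg _)]
    congr 1
    refine Finset.sum_congr rfl (fun j _ => ?_)
    rw [ENNReal.toReal_mul, ENNReal.toReal_ofReal (fj_nonneg _),
      ENNReal.toReal_ofReal (logdag_nonneg _)]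
  -- final computation
  rw [Ecand]
  have hfact : (0:ℝ) < (n.factorial : ℝ) := by positivity
  calc (n.factorial : ℝ)⁻¹ * ∑ π : Equiv.Perm (Fin n),
        (volume {r ∈ Set.Ico (0:ℝ) 1 | IsCandidate v s r π i}).toReal
      ≤ (n.factorial : ℝ)⁻¹ * ((n.factorial : ℝ) * (fj i.val + ((k:ℝ)+1)⁻¹ * logdag (2 * v i s / lw z)
          + ∑ j ∈ D, fj j.val * logdag (v i s / lw j))) := by
        apply mul_le_mul_of_nonneg_left hmain (by positivity)
    _ = fj i.val + ((k:ℝ)+1)⁻¹ * logdag (2 * v i s / lw z)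
          + ∑ j ∈ D, fj j.val * logdag (v i s / lw j) := by
        rw [← mul_assoc, inv_mul_cancel₀ (ne_of_gt hfact), one_mul]
    _ = _ := by
        simp only [hlw, hz, fj, one_div, div_eq_mul_inv]
        congr 1
        · ring
        · exact Finset.sum_congr rfl (fun j _ => mul_comm _ _)
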